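/- arXiv:1211.4479 — 8 statements merged into one kernel-verified Lean document; each statement's English description precedes it below -/
import Mathlib

section
/- Let n be a nonzero integer and u a complex number. Then f_n(u) = 0 if and only if u = ζ + ζ⁻¹ for some 2n-th root of unity ζ with ζ ≠ ±1. -/
open Polynomial


private lemma key_id (f : ℤ → Polynomial ℤ) (h0 : f 0 = 0) (h1 : f 1 = 1)
    (hrec : ∀ n : ℤ, f (n - 1) + f (n + 1) = X * f n) (ζ : ℂ) (hζ : ζ ≠ 0) :
    ∀ n : ℤ, (ζ - ζ⁻¹) * Polynomial.aeval (ζ + ζ⁻¹) (f n) = ζ ^ n - ζ ^ (-n) := by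
  set F : ℤ → ℂ := fun m => Polynomial.aeval (ζ + ζ⁻¹) (f m) with hF
  have haev : ∀ m : ℤ, F (m - 1) + F (m + 1) = (ζ + ζ⁻¹) * F m := by
    intro m
    have := congrArg (Polynomial.aeval (ζ + ζ⁻¹)) (hrec m)
    simpa [hF, map_add, map_mul] using this
  have hinv : ζ * ζ⁻¹ = 1 := mul_inv_cancel₀ hζ
  suffices H : ∀ m : ℤ, ((ζ - ζ⁻¹) * F m = ζ ^ m - ζ ^ (-m)) ∧
      ((ζ - ζ⁻¹) * F (m + 1) = ζ ^ (m + 1) - ζ ^ (-(m + 1))) from fun n => (H n).1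
  intro m
  induction m using Int.induction_on with
  | zero => simp [hF, h0, h1]
  | succ k ih =>
    obtain ⟨ihk, ihk1⟩ := ih
    refine ⟨ihk1, ?_⟩
    have h2 := haev ((k : ℤ) + 1)
    rw [show ((k:ℤ) + 1 - 1) = (k:ℤ) by ring] at h2
    have hstep : F ((k:ℤ) + 1 + 1) = (ζ + ζ⁻¹) * F ((k:ℤ) + 1) - F (k:ℤ) := by
      linear_combination h2
    rw [hstep]
    have e1 : ζ ^ ((k:ℤ) + 1 + 1) = ζ ^ ((k:ℤ) + 1) * ζ := zpow_add_one₀ hζ _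
    have e3 : ζ ^ (-((k:ℤ) + 1 + 1)) = ζ ^ (-((k:ℤ) + 1)) * ζ⁻¹ := by
      rw [show -((k:ℤ) + 1 + 1) = -((k:ℤ) + 1) - 1 by ring, zpow_sub_one₀ hζ]
    have e5 : ζ ^ (k:ℤ) = ζ ^ ((k:ℤ) + 1) * ζ⁻¹ := by
      rw [← zpow_sub_one₀ hζ]; norm_num
    have e6 : ζ ^ (-(k:ℤ)) = ζ ^ (-((k:ℤ) + 1)) * ζ := by
      rw [← zpow_add_one₀ hζ]; congr 1; ring
    rw [e5, e6] at ihk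
    rw [e1, e3]
    linear_combination (ζ + ζ⁻¹) * ihk1 - ihk
  | pred k ih =>
    obtain ⟨ihk, ihk1⟩ := ih
    have h2 := haev (-(k : ℤ))
    rw [show (-(k:ℤ) - 1 + 1) = -(k:ℤ) by ring]
    refine ⟨?_, ihk⟩
    have hstep : F (-(k:ℤ) - 1) = (ζ + ζ⁻¹) * F (-(k:ℤ)) - F (-(k:ℤ) + 1) := by
      linear_combination h2
    rw [hstep]
    have e1 : ζ ^ (-(k:ℤ) - 1) = ζ ^ (-(k:ℤ)) * ζ⁻¹ := zpow_sub_one₀ hζ _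
    have e3 : ζ ^ (-(-(k:ℤ) - 1)) = ζ ^ (-(-(k:ℤ))) * ζ := by
      rw [← zpow_add_one₀ hζ]; congr 1; ring
    have e5 : ζ ^ (-(k:ℤ) + 1) = ζ ^ (-(k:ℤ)) * ζ := zpow_add_one₀ hζ _
    have e6 : ζ ^ (-(-(k:ℤ) + 1)) = ζ ^ (-(-(k:ℤ))) * ζ⁻¹ := by
      rw [← zpow_sub_one₀ hζ]; congr 1; ring
    rw [e5, e6] at ihk1
    rw [e1, e3]
    linear_combination (ζ + ζ⁻¹) * ihk - ihk1


private lemma eval_two (f : ℤ → Polynomial ℤ) (h0 : f 0 = 0) (h1 : f 1 = 1)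
    (hrec : ∀ n : ℤ, f (n - 1) + f (n + 1) = X * f n) :
    ∀ n : ℤ, Polynomial.aeval (2 : ℂ) (f n) = (n : ℂ) := by
  set F : ℤ → ℂ := fun m => Polynomial.aeval (2 : ℂ) (f m) with hF
  have haev : ∀ m : ℤ, F (m - 1) + F (m + 1) = 2 * F m := by
    intro m
    have := congrArg (Polynomial.aeval (2 : ℂ)) (hrec m)
    simpa [hF, map_add, map_mul] using this
  suffices H : ∀ m : ℤ, (F m = (m : ℂ)) ∧ (F (m + 1) = ((m : ℂ) + 1)) by
    intro n; exact (H n).1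
  intro m
  induction m using Int.induction_on with
  | zero => simp [hF, h0, h1]
  | succ k ih =>
    obtain ⟨ihk, ihk1⟩ := ih
    refine ⟨by push_cast at ihk1 ⊢; linear_combination ihk1, ?_⟩
    have h2 := haev ((k : ℤ) + 1)
    rw [show ((k:ℤ) + 1 - 1) = (k:ℤ) by ring] at h2
    rw [ihk, ihk1] at h2
    push_cast at h2 ⊢
    linear_combination h2
  | pred k ih =>
    obtain ⟨ihk, ihk1⟩ := ih
    have h2 := haev (-(k : ℤ))
    rw [show (-(k:ℤ) - 1 + 1) = -(k:ℤ) by ring]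
    refine ⟨?_, by push_cast at ihk ⊢; linear_combination ihk⟩
    rw [ihk, ihk1] at h2
    push_cast at h2 ⊢
    linear_combination h2

private lemma eval_neg_two (f : ℤ → Polynomial ℤ) (h0 : f 0 = 0) (h1 : f 1 = 1)
    (hrec : ∀ n : ℤ, f (n - 1) + f (n + 1) = X * f n) :
    ∀ n : ℤ, Polynomial.aeval (-2 : ℂ) (f n) = (-1) ^ (n + 1) * (n : ℂ) := by
  set F : ℤ → ℂ := fun m => Polynomial.aeval (-2 : ℂ) (f m) with hF
  have haev : ∀ m : ℤ, F (m - 1) + F (m + 1) = -2 * F m := by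
    intro m
    have := congrArg (Polynomial.aeval (-2 : ℂ)) (hrec m)
    simpa [hF, map_add, map_mul] using this
  have hm1 : (-1 : ℂ) ≠ 0 := by norm_num
  suffices H : ∀ m : ℤ, (F m = (-1) ^ (m + 1) * (m : ℂ)) ∧
      (F (m + 1) = (-1) ^ (m + 1 + 1) * ((m : ℂ) + 1)) by
    intro n; exact (H n).1
  intro m
  induction m using Int.induction_on with
  | zero =>
    constructor
    · simp [hF, h0]
    · simp [hF, h1]
  | succ k ih =>
    obtain ⟨ihk, ihk1⟩ := ih
    refine ⟨by push_cast at ihk1 ⊢; linear_combination ihk1, ?_⟩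
    have h2 := haev ((k : ℤ) + 1)
    rw [show ((k:ℤ) + 1 - 1) = (k:ℤ) by ring] at h2
    rw [ihk, ihk1] at h2
    have e1 : ((-1 : ℂ)) ^ ((k:ℤ) + 1 + 1 + 1) = (-1) ^ ((k:ℤ) + 1 + 1) * (-1) :=
      zpow_add_one₀ hm1 _
    have e2 : ((-1 : ℂ)) ^ ((k:ℤ) + 1 + 1) = (-1) ^ ((k:ℤ) + 1) * (-1) :=
      zpow_add_one₀ hm1 _
    rw [e2] at h2
    rw [e1, e2]
    push_cast at h2 ⊢
    linear_combination h2
  | pred k ih =>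
    obtain ⟨ihk, ihk1⟩ := ih
    have h2 := haev (-(k : ℤ))
    rw [show (-(k:ℤ) - 1 + 1) = -(k:ℤ) by ring]
    refine ⟨?_, by push_cast at ihk ⊢; linear_combination ihk⟩
    rw [ihk, ihk1] at h2
    have e1 : ((-1 : ℂ)) ^ (-(k:ℤ) + 1) = (-1) ^ (-(k:ℤ)) * (-1) := zpow_add_one₀ hm1 _
    have e2 : ((-1 : ℂ)) ^ (-(k:ℤ) + 1 + 1) = (-1) ^ (-(k:ℤ)) * (-1) * (-1) := by
      rw [zpow_add_one₀ hm1, e1]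
    rw [e1, e2] at h2
    push_cast at h2 ⊢
    linear_combination h2

theorem stmt_7 (f : ℤ → Polynomial ℤ) (h0 : f 0 = 0) (h1 : f 1 = 1)
    (hrec : ∀ n : ℤ, f (n - 1) + f (n + 1) = X * f n) (n : ℤ) (hn : n ≠ 0) (u : ℂ) :
    Polynomial.aeval u (f n) = 0 ↔
      ∃ ζ : ℂ, ζ ^ (2 * n) = 1 ∧ ζ ≠ 1 ∧ ζ ≠ -1 ∧ u = ζ + ζ⁻¹ := by
  have key : ∀ ζ : ℂ, ζ ≠ 0 → ∀ m : ℤ,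
      (ζ - ζ⁻¹) * Polynomial.aeval (ζ + ζ⁻¹) (f m) = ζ ^ m - ζ ^ (-m) :=
    fun ζ hζ => key_id f h0 h1 hrec ζ hζ
  have ev2 := eval_two f h0 h1 hrec
  have evm2 := eval_neg_two f h0 h1 hrec
  constructor
  · intro h
    obtain ⟨s, hs⟩ : ∃ s : ℂ, s ^ 2 = u ^ 2 - 4 := by
      obtain ⟨s, hs⟩ := IsAlgClosed.exists_pow_nat_eq (u ^ 2 - 4) (n := 2) (by norm_num)
      exact ⟨s, hs⟩
    set ζ : ℂ := (u + s) / 2 with hζdef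
    have hq : ζ ^ 2 - u * ζ + 1 = 0 := by
      rw [hζdef]; field_simp; linear_combination hs
    have hζ0 : ζ ≠ 0 := by
      intro hz
      rw [hz] at hq
      simp at hq
    have hu : u = ζ + ζ⁻¹ := by
      field_simp
      linear_combination -hq
    by_cases hζ1 : ζ = 1
    · exfalso
      have : u = 2 := by rw [hu, hζ1]; norm_num
      rw [this, ev2 n] at h
      exact hn (by exact_mod_cast h)
    by_cases hζm1 : ζ = -1
    · exfalso
      have : u = -2 := by rw [hu, hζm1]; norm_num
      rw [this, evm2 n] at h
      rcases mul_eq_zero.1 h with h' | h'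
      · exact zpow_ne_zero _ (by norm_num : (-1:ℂ) ≠ 0) h'
      · exact hn (by exact_mod_cast h')
    refine ⟨ζ, ?_, hζ1, hζm1, hu⟩
    have hk := key ζ hζ0 n
    rw [← hu, h, mul_zero] at hk
    have hzz : ζ ^ n = ζ ^ (-n) := by linear_combination -hk
    have h2n : ζ ^ (2 * n) = ζ ^ n * ζ ^ (-n) := by
      rw [← hzz, ← zpow_add₀ hζ0]; ring_nf
    rw [h2n, ← zpow_add₀ hζ0, show n + -n = 0 by ring, zpow_zero]
  · rintro ⟨ζ, hroot, hζ1, hζm1, rfl⟩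
    have hζ0 : ζ ≠ 0 := by
      intro hz
      rw [hz, zero_zpow _ (by omega : 2 * n ≠ 0)] at hroot
      exact one_ne_zero hroot.symm
    have hk := key ζ hζ0 n
    have hzz : ζ ^ n - ζ ^ (-n) = 0 := by
      have : ζ ^ (-n) * ζ ^ (2 * n) = ζ ^ n := by
        rw [← zpow_add₀ hζ0]; congr 1; ring
      rw [← this, hroot]
      ring
    rw [hzz] at hk
    have hne : ζ - ζ⁻¹ ≠ 0 := by
      intro hz
      have h2 : ζ ^ 2 = 1 := by
        have : ζ = ζ⁻¹ := by linear_combination hz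
        calc ζ ^ 2 = ζ * ζ := sq ζ
        _ = ζ * ζ⁻¹ := by rw [← this]
        _ = 1 := mul_inv_cancel₀ hζ0
      have : (ζ - 1) * (ζ + 1) = 0 := by linear_combination h2
      rcases mul_eq_zero.1 this with h' | h'
      · exact hζ1 (by linear_combination h')
      · exact hζm1 (by linear_combination h')
    exact (mul_eq_zero.1 hk).resolve_left hne
end

section
/- For every integer n, the polynomial identity (f_{n-1}(u) + 1)·(f_{n+1}(u) + 1) = f_n(u)·(u + f_n(u)) holds, where f_n are the Fibonacci polynomials. -/
open Polynomial

theorem stmt_9 (f : ℤ → Polynomial ℤ) (h0 : f 0 = 0) (h1 : f 1 = 1)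
    (hrec : ∀ n : ℤ, f (n - 1) + f (n + 1) = X * f n) (n : ℤ) :
    (f (n - 1) + 1) * (f (n + 1) + 1) = f n * (X + f n) := by
  have cas : ∀ m : ℤ, f m * f m - f (m - 1) * f (m + 1) = 1 := by
    intro m
    induction m using Int.induction_on with
    | zero =>
      have h := hrec 0
      simp only [show (0 : ℤ) - 1 = -1 from by ring,
        show (0 : ℤ) + 1 = 1 from by ring, h0, h1, mul_zero] at h ⊢
      linear_combination -h
    | succ k ih =>
      have H1 := hrec k
      have H2 := hrec (k + 1)
      simp only [show (k : ℤ) + 1 - 1 = k from by ring,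
        show (k : ℤ) + 1 + 1 = k + 2 from by ring] at H2 ⊢
      linear_combination ih + f (k + 1) * H1 - f k * H2
    | pred k ih =>
      have H1 := hrec (-k)
      have H2 := hrec (-k - 1)
      simp only [show (-k : ℤ) - 1 - 1 = -k - 2 from by ring,
        show (-k : ℤ) - 1 + 1 = -k from by ring,
        show (-(k : ℤ) - 1 : ℤ) = -k - 1 from by ring] at H2 ⊢
      simp -failIfUnchanged only [show (-(k + 1) : ℤ) = -k - 1 from by ring,
        show (-(k + 1) : ℤ) - 1 = -k - 2 from by ring,
        show (-(k + 1) : ℤ) + 1 = -k from by ring] at *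
      linear_combination ih + f (-k - 1) * H1 - f (-k) * H2
  linear_combination hrec n - cas n
end

section
/- For every even integer n = 2m, the identity f_{n-1}(u) - 1 = f_{m-1}(u)·(f_{m+1}(u) - f_{m-1}(u)) holds, and for every odd integer n = 2m+1, the identity f_{n-1}(u) - 1 = (f_m(u) + f_{m-1}(u))·(f_{m+1}(u) - f_m(u)) holds. -/
open Polynomial

theorem stmt_11 (f : ℤ → Polynomial ℤ) (h0 : f 0 = 0) (h1 : f 1 = 1)
    (hrec : ∀ n : ℤ, f (n - 1) + f (n + 1) = X * f n) (m : ℤ) :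
    f (2 * m - 1) - 1 = f (m - 1) * (f (m + 1) - f (m - 1)) ∧
    f (2 * m) - 1 = (f m + f (m - 1)) * (f (m + 1) - f m) := by
  have hneg : f (-1) = -1 := by
    have h := hrec 0
    norm_num [h0, h1] at h
    linear_combination h
  -- addition formula
  have key : ∀ n : ℤ, ∀ p : ℤ, (f (p + n) = f p * f (n + 1) - f (p - 1) * f n)
      ∧ (f (p + n - 1) = f p * f n - f (p - 1) * f (n - 1)) := by
    intro n
    induction n using Int.induction_on with
    | zero =>
      intro p
      constructor
      · rw [show p + 0 = p by ring]
        norm_num [h0, h1]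
      · rw [show p + 0 - 1 = p - 1 by ring, show (0:ℤ) - 1 = -1 by ring]
        rw [h0, hneg]; ring
    | succ k ih =>
      intro p
      obtain ⟨ih1, ih2⟩ := ih p
      constructor
      · rw [show p + ((k:ℤ) + 1) = p + k + 1 by ring,
            show (k:ℤ) + 1 + 1 = k + 1 + 1 by ring]
        have e1 := hrec (p + k)
        have e2 := hrec (k + 1)
        rw [show (k:ℤ) + 1 - 1 = k by ring] at e2
        linear_combination e1 + X * ih1 - ih2 - f p * e2 + f (p-1) * hrec k
      · rw [show p + ((k:ℤ) + 1) - 1 = p + k by ring,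
            show (k:ℤ) + 1 - 1 = k by ring]
        exact ih1
    | pred k ih =>
      intro p
      obtain ⟨ih1, ih2⟩ := ih p
      constructor
      · rw [show p + (-(k:ℤ) - 1) = p + -(k:ℤ) - 1 by ring,
            show -(k:ℤ) - 1 + 1 = -(k:ℤ) by ring]
        exact ih2
      · rw [show p + (-(k:ℤ) - 1) - 1 = p + -(k:ℤ) - 1 - 1 by ring]
        have e1 := hrec (p + -(k:ℤ) - 1)
        rw [show p + -(k:ℤ) - 1 + 1 = p + -(k:ℤ) by ring] at e1
        have e2 := hrec (-(k:ℤ))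
        have e3 := hrec (-(k:ℤ) - 1)
        rw [show -(k:ℤ) - 1 + 1 = -(k:ℤ) by ring] at e3
        linear_combination e1 - ih1 + X * ih2 - f p * e2 + f (p-1) * e3
  -- Catalan identity
  have cat : ∀ q : ℤ, f (q + 1) * f (q - 1) - f q * f q = -1 := by
    intro q
    induction q using Int.induction_on with
    | zero => norm_num [h0, h1, hneg]
    | succ k ih =>
      have e1 := hrec (k + 1)
      rw [show (k:ℤ) + 1 - 1 = k by ring] at e1 ⊢
      linear_combination f k * e1 + ih - f ((k:ℤ)+1) * hrec k
    | pred k ih =>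
      rw [show -(k:ℤ) - 1 + 1 = -(k:ℤ) by ring]
      have e1 := hrec (-(k:ℤ) - 1)
      rw [show -(k:ℤ) - 1 + 1 = -(k:ℤ) by ring] at e1
      have e2 := hrec (-(k:ℤ))
      linear_combination f (-(k:ℤ)) * e1 + ih - f (-(k:ℤ) - 1) * e2
  constructor
  · have a1 := (key (m - 1) m).1
    rw [show m + (m - 1) = 2 * m - 1 by ring, show m - 1 + 1 = m by ring] at a1
    linear_combination a1 - cat m
  · have a2 := (key m m).1
    rw [show m + m = 2 * m by ring] at a2
    linear_combination a2 - cat m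
end

section
/- For every nonzero integer n, the Fibonacci polynomial f_n is separable: it has no repeated roots over ℂ. -/
open Polynomial

section
set_option linter.unusedSectionVars false
variable (f : ℤ → Polynomial ℤ) (h0 : f 0 = 0) (h1 : f 1 = 1)
  (hrec : ∀ n : ℤ, f (n - 1) + f (n + 1) = X * f n)

include h0 h1 hrec

lemma aux_step (n : ℤ) : f (n + 1) = X * f n - f (n - 1) := by
  linear_combination hrec n

lemma aux_stepdown (n : ℤ) : f (n - 1) = X * f n - f (n + 1) := by
  linear_combination hrec n

lemma aux_neg : ∀ m : ℕ, f (-(m : ℤ)) = - f m := by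
  have key : ∀ m : ℕ, f (-(m : ℤ)) = - f m ∧ f (-(m : ℤ) - 1) = - f ((m : ℤ) + 1) := by
    intro m
    induction m with
    | zero =>
      refine ⟨by simp [h0], ?_⟩
      have h' := hrec 0
      norm_num [h0] at h'
      push_cast
      norm_num
      linear_combination h'
    | succ k ih =>
      obtain ⟨ih1, ih2⟩ := ih
      have c1 : (-(((k:ℕ)+1 : ℕ) : ℤ)) = -(k:ℤ) - 1 := by push_cast; ring
      have c2 : ((((k:ℕ)+1 : ℕ)) : ℤ) = (k:ℤ) + 1 := by push_cast; ring
      refine ⟨by rw [c1, c2]; exact ih2, ?_⟩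
      rw [c1, c2]
      have hd := aux_stepdown f h0 h1 hrec (-(k:ℤ) - 1)
      rw [show (-(k:ℤ) - 1 + 1) = -(k:ℤ) by ring, ih1, ih2] at hd
      have hu := aux_step f h0 h1 hrec ((k:ℤ) + 1)
      rw [show ((k:ℤ) + 1 - 1) = (k:ℤ) by ring] at hu
      rw [hd, hu]
      ring
  exact fun m => (key m).1

lemma aux_monic : ∀ m : ℕ, (f ((m : ℤ) + 1)).Monic ∧ (f ((m : ℤ) + 1)).natDegree = m := by
  have key : ∀ m : ℕ, ((f ((m:ℤ)+1)).Monic ∧ (f ((m:ℤ)+1)).natDegree = m) ∧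
      ((f ((m:ℤ)+2)).Monic ∧ (f ((m:ℤ)+2)).natDegree = m+1) := by
    intro m
    induction m with
    | zero =>
      have hf2 : f 2 = X := by
        have h' := hrec 1
        norm_num [h0, h1] at h'
        linear_combination h'
      norm_num
      exact ⟨⟨by rw [h1]; exact monic_one, by rw [h1]; simp⟩,
        ⟨by rw [hf2]; exact monic_X, by rw [hf2]; simp⟩⟩
    | succ k ih =>
      obtain ⟨⟨m1, d1⟩, ⟨m2, d2⟩⟩ := ih
      have hstep := aux_step f h0 h1 hrec ((k:ℤ) + 2)
      rw [show ((k:ℤ) + 2 - 1) = (k:ℤ) + 1 by ring] at hstep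
      have hXm : (X * f ((k:ℤ)+2)).Monic := monic_X.mul m2
      have hXd : (X * f ((k:ℤ)+2)).natDegree = k + 2 := by
        rw [natDegree_X_mul m2.ne_zero, d2]
      have hdeglt : (f ((k:ℤ)+1)).degree < (X * f ((k:ℤ)+2)).degree := by
        rw [degree_eq_natDegree m1.ne_zero, degree_eq_natDegree hXm.ne_zero, hXd, d1]
        exact_mod_cast by omega
      have m3 : (f ((k:ℤ)+2+1)).Monic := by
        rw [hstep, sub_eq_add_neg]
        exact hXm.add_of_left (by rwa [degree_neg])
      have d3 : (f ((k:ℤ)+2+1)).natDegree = k + 2 := by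
        rw [hstep, sub_eq_add_neg, natDegree_add_eq_left_of_degree_lt (by rwa [degree_neg]), hXd]
      have c1 : (((k+1 : ℕ)) : ℤ) + 1 = (k:ℤ) + 2 := by push_cast; ring
      have c2 : (((k+1 : ℕ)) : ℤ) + 2 = (k:ℤ) + 2 + 1 := by push_cast; ring
      exact ⟨⟨by rw [c1]; exact m2, by rw [c1, d2]⟩, ⟨by rw [c2]; exact m3, by rw [c2, d3]⟩⟩
  exact fun m => (key m).1

lemma aux_eval (z : ℂ) : ∀ n : ℤ,
    ((f n).map (Int.castRingHom ℂ)).eval (2 * Complex.cos z) * Complex.sin z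
      = Complex.sin ((n : ℂ) * z) := by
  set φ := Int.castRingHom ℂ with hφ
  set e : ℤ → ℂ := fun n => ((f n).map φ).eval (2 * Complex.cos z) * Complex.sin z with he
  have erec : ∀ n : ℤ, e (n+1) = 2 * Complex.cos z * e n - e (n-1) := by
    intro n
    simp only [he, aux_step f h0 h1 hrec n, Polynomial.map_sub, Polynomial.map_mul,
      Polynomial.map_X, eval_sub, eval_mul, eval_X]
    ring
  have srec : ∀ w : ℂ, Complex.sin (w*z + z) = 2 * Complex.cos z * Complex.sin (w*z)
      - Complex.sin (w*z - z) := by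
    intro w
    rw [Complex.sin_add, Complex.sin_sub]
    ring
  have srec' : ∀ w : ℂ, Complex.sin ((w+1) * z) = 2 * Complex.cos z * Complex.sin (w * z)
      - Complex.sin ((w-1) * z) := by
    intro w
    rw [show (w+1)*z = w*z + z by ring, show (w-1)*z = w*z - z by ring,
      Complex.sin_add, Complex.sin_sub]
    ring
  have key : ∀ n : ℤ, e n = Complex.sin ((n:ℂ) * z) ∧ e (n+1) = Complex.sin (((n:ℂ)+1) * z) := by
    intro n
    induction n using Int.induction_on with
    | zero => exact ⟨by simp [he, h0], by simp [he, h1]⟩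
    | succ k ih =>
      obtain ⟨i1, i2⟩ := ih
      have c1 : (((k:ℤ)+1 : ℤ) : ℂ) = (((k:ℤ):ℤ):ℂ) + 1 := by push_cast; ring
      refine ⟨by rw [c1]; exact i2, ?_⟩
      rw [c1, erec ((k:ℤ)+1), show ((k:ℤ)+1-1 : ℤ) = (k:ℤ) by ring, i1, i2]
      have hs := srec' ((((k:ℤ):ℤ):ℂ) + 1)
      rw [show (((k:ℤ):ℤ):ℂ) + 1 - 1 = (((k:ℤ):ℤ):ℂ) by ring] at hs
      linear_combination -hs
    | pred k ih =>
      obtain ⟨i1, i2⟩ := ih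
      have c1 : ((-(k:ℤ)-1 : ℤ) : ℂ) = ((-(k:ℤ) : ℤ):ℂ) - 1 := by push_cast; ring
      have c2 : (-(k:ℤ)-1+1 : ℤ) = -(k:ℤ) := by ring
      refine ⟨?_, by rw [c2, c1, show ((-(k:ℤ):ℤ):ℂ) - 1 + 1 = ((-(k:ℤ):ℤ):ℂ) by ring]; exact i1⟩
      have h' := erec (-(k:ℤ))
      rw [i1, i2] at h'
      have hs := srec' ((-(k:ℤ) : ℤ):ℂ)
      rw [c1]
      show e (-(k:ℤ)-1) = Complex.sin ((((-(k:ℤ) : ℤ):ℂ) - 1) * z)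
      linear_combination h' - hs
  exact fun n => (key n).1

omit h0 h1 hrec in
lemma aux_sep_generic (m : ℕ) (p : ℂ[X]) (hm : p.Monic) (hd : p.natDegree = m)
    (hroot : ∀ k, k < m → p.IsRoot (((2 * Real.cos (((k:ℝ)+1) * Real.pi / ((m:ℝ)+1)) : ℝ)) : ℂ)) :
    p.Separable := by
  set r : ℕ → ℂ := fun k => (((2 * Real.cos (((k:ℝ)+1) * Real.pi / ((m:ℝ)+1)) : ℝ)) : ℂ) with hr
  have hinj : Set.InjOn r (Finset.range m) := by
    intro a ha b hb hab
    simp only [Finset.coe_range, Set.mem_Iio] at ha hb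
    have hθ : ∀ k : ℕ, k < m → ((k:ℝ)+1) * Real.pi / ((m:ℝ)+1) ∈ Set.Icc 0 Real.pi := by
      intro k hk
      constructor
      · positivity
      · rw [div_le_iff₀ (by positivity)]
        have : (k:ℝ)+1 ≤ (m:ℝ)+1 := by
          have : (k:ℝ) ≤ (m:ℝ) := by exact_mod_cast hk.le
          linarith
        nlinarith [Real.pi_pos]
    have := Real.injOn_cos (hθ a ha) (hθ b hb) ?_
    · have hne : ((m:ℝ)+1) ≠ 0 := by positivity
      field_simp [Real.pi_ne_zero] at this
      exact_mod_cast add_right_cancel this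
    · have hab' := Complex.ofReal_inj.mp hab
      linarith
  have hp0 : p ≠ 0 := hm.ne_zero
  set S : Finset ℂ := (Finset.range m).image r with hS
  have hcard : S.card = m := by
    rw [hS, Finset.card_image_of_injOn hinj, Finset.card_range]
  have hle : S.val ≤ p.roots := by
    rw [Multiset.le_iff_subset S.nodup]
    intro a ha
    rw [Finset.mem_val, hS, Finset.mem_image] at ha
    obtain ⟨k, hk, rfl⟩ := ha
    rw [mem_roots hp0]
    exact hroot k (Finset.mem_range.mp hk)
  have hcard2 : p.roots.card ≤ S.val.card := by
    have := Polynomial.card_roots' p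
    rw [hd] at this
    simpa [hcard] using this
  have hroots : p.roots = S.val := (Multiset.eq_of_le_of_card_le hle hcard2).symm
  have hnodup : p.roots.Nodup := hroots ▸ S.nodup
  exact (Polynomial.nodup_roots_iff_of_splits hp0 (IsAlgClosed.splits p)).mp hnodup

lemma aux_pos (m : ℕ) : (((f ((m:ℤ)+1)).map (Int.castRingHom ℂ))).Separable := by
  set φ := Int.castRingHom ℂ
  obtain ⟨hmon, hdeg⟩ := aux_monic f h0 h1 hrec m
  refine aux_sep_generic m _ (hmon.map φ) (by rw [hmon.natDegree_map, hdeg]) ?_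
  intro k hk
  set θ : ℝ := ((k:ℝ)+1) * Real.pi / ((m:ℝ)+1) with hθ
  have hEv := aux_eval f h0 h1 hrec (θ:ℂ) ((m:ℤ)+1)
  have hm0 : ((m:ℝ)+1) ≠ 0 := by positivity
  have hsin0 : Complex.sin ((((m:ℤ)+1 : ℤ) : ℂ) * (θ:ℂ)) = 0 := by
    have hm : ((m:ℂ)+1) ≠ 0 := by exact_mod_cast (Complex.ofReal_ne_zero.mpr hm0)
    have : (((m:ℤ)+1 : ℤ) : ℂ) * (θ:ℂ) = (((k:ℕ)+1 : ℕ) : ℂ) * (Real.pi : ℂ) := by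
      rw [hθ]
      push_cast
      field_simp
    rw [this]
    exact_mod_cast Complex.sin_nat_mul_pi (k+1)
  have hsinθ : Complex.sin (θ:ℂ) ≠ 0 := by
    rw [← Complex.ofReal_sin]
    rw [Complex.ofReal_ne_zero]
    have h1' : 0 < θ := by rw [hθ]; positivity
    have h2' : θ < Real.pi := by
      rw [hθ, div_lt_iff₀ (by positivity)]
      have : (k:ℝ)+1 < (m:ℝ)+1 := by
        have : (k:ℝ) < (m:ℝ) := by exact_mod_cast hk
        linarith
      nlinarith [Real.pi_pos]
    exact (Real.sin_pos_of_pos_of_lt_pi h1' h2').ne'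
  rw [hsin0] at hEv
  have : eval (2 * Complex.cos (θ:ℂ)) ((f ((m:ℤ)+1)).map φ) = 0 :=
    by
      rcases mul_eq_zero.mp hEv with h | h
      · exact h
      · exact absurd h hsinθ
  show IsRoot _ _
  rw [IsRoot.def, show (((2 * Real.cos θ : ℝ)) : ℂ) = 2 * Complex.cos (θ:ℂ) by
    push_cast [Complex.ofReal_cos]; ring]
  exact this

end

theorem stmt_12 (f : ℤ → Polynomial ℤ) (h0 : f 0 = 0) (h1 : f 1 = 1)
    (hrec : ∀ n : ℤ, f (n - 1) + f (n + 1) = X * f n) (n : ℤ) (hn : n ≠ 0) :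
    ((f n).map (Int.castRingHom ℂ)).Separable := by
  rcases lt_or_gt_of_ne hn with h | h
  · obtain ⟨m, hm⟩ : ∃ m : ℕ, -n = (m:ℤ)+1 := ⟨(-n-1).toNat, by omega⟩
    have hneg := aux_neg f h0 h1 hrec (m+1)
    have hn' : n = -((m+1 : ℕ) : ℤ) := by push_cast; omega
    rw [hn', hneg, Polynomial.map_neg]
    have hsep : (((f (((m:ℕ)+1 : ℕ))).map (Int.castRingHom ℂ))).Separable := by
      have := aux_pos f h0 h1 hrec m
      rwa [show ((m:ℤ)+1) = (((m:ℕ)+1 : ℕ) : ℤ) by push_cast; ring] at this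
    unfold Polynomial.Separable at hsep ⊢
    rw [derivative_neg]
    exact hsep.neg_left.neg_right
  · obtain ⟨m, hm⟩ : ∃ m : ℕ, n = (m:ℤ)+1 := ⟨(n-1).toNat, by omega⟩
    rw [hm]
    exact aux_pos f h0 h1 hrec m
end

section
/- For every integer n, the polynomials f_{n+1}(u) - f_n(u) and f_{n+1}(u) + f_n(u) are both separable (have no repeated roots over ℂ). -/
open Polynomial

noncomputable section AuxStmt13

local notation "φ" => Int.castRingHom ℂ

/-- A monic integer polynomial of degree `m` with `m` distinct complex roots is
separable over `ℂ`. -/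
lemma aux13_sep_of_roots (p : Polynomial ℤ) (m : ℕ) (hm : p.Monic)
    (hdeg : p.natDegree = m) (x : ℕ → ℂ)
    (hinj : ∀ k < m, ∀ j < m, x k = x j → k = j)
    (hroot : ∀ k < m, (p.map φ).eval (x k) = 0) :
    (p.map φ).Separable := by
  set q : Polynomial ℂ := p.map φ with hq
  have hqmonic : q.Monic := hm.map φ
  have hqne : q ≠ 0 := hqmonic.ne_zero
  have hqdeg : q.natDegree = m := by
    rw [hq, natDegree_map_eq_of_injective Int.cast_injective p, hdeg]
  have hsplits : q.Splits := IsAlgClosed.splits q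
  have hcard : Multiset.card q.roots = m := by
    rw [splits_iff_card_roots.mp hsplits, hqdeg]
  -- the finset of exhibited roots
  set S : Finset ℂ := (Finset.range m).image x with hS
  have hScard : S.card = m := by
    rw [hS, Finset.card_image_of_injOn, Finset.card_range]
    intro a ha b hb hab
    exact hinj a (Finset.mem_range.mp ha) b (Finset.mem_range.mp hb) hab
  have hsub : S ⊆ q.roots.toFinset := by
    intro a ha
    rw [hS, Finset.mem_image] at ha
    obtain ⟨k, hk, rfl⟩ := ha
    rw [Multiset.mem_toFinset, mem_roots hqne]
    exact hroot k (Finset.mem_range.mp hk)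
  have hle : m ≤ q.roots.toFinset.card := hScard ▸ Finset.card_le_card hsub
  have hge : q.roots.toFinset.card ≤ m := hcard ▸ Multiset.toFinset_card_le _
  have hnodup : q.roots.Nodup := by
    rw [← Multiset.toFinset_card_eq_card_iff_nodup, hcard]
    omega
  exact (nodup_roots_iff_of_splits hqne hsplits).mp hnodup

lemma aux13_sep_neg {p : Polynomial ℂ} (h : p.Separable) : (-p).Separable := by
  rw [Polynomial.Separable] at h ⊢
  rw [derivative_neg]
  exact h.neg_left.neg_right

section

variable (f : ℤ → Polynomial ℤ) (h0 : f 0 = 0) (h1 : f 1 = 1)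
  (hrec : ∀ n : ℤ, f (n - 1) + f (n + 1) = X * f n)

include hrec in
lemma aux13_frec2 : ∀ n : ℤ, f (n + 2) = X * f (n + 1) - f n := by
  intro n
  have h := hrec (n + 1)
  have e1 : n + 1 - 1 = n := by ring
  have e2 : n + 1 + 1 = n + 2 := by ring
  rw [e1, e2] at h
  linear_combination h

include h0 h1 hrec in
lemma aux13_fneg : ∀ m : ℕ, f (-(m : ℤ)) = -f (m : ℤ) := by
  have key : ∀ m : ℕ, f (-(m : ℤ)) = -f (m : ℤ) ∧ f (-((m : ℤ) + 1)) = -f ((m : ℤ) + 1) := by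
    intro m
    induction m with
    | zero =>
      constructor
      · simp [h0]
      · have h := hrec 0
        simp only [zero_sub, zero_add, h0, mul_zero] at h
        have : f (-1) = -f 1 := by linear_combination h
        simpa using this
    | succ k ih =>
      refine ⟨by simpa using ih.2, ?_⟩
      have h := hrec (-(k : ℤ) - 1)
      have e1 : -(k : ℤ) - 1 - 1 = -((k : ℤ) + 1 + 1) := by ring
      have e2 : -(k : ℤ) - 1 + 1 = -(k : ℤ) := by ring
      have e3 : -(k : ℤ) - 1 = -((k : ℤ) + 1) := by ring
      rw [e1, e2, e3] at h
      have hr := aux13_frec2 f hrec (k : ℤ)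
      have e4 : (k : ℤ) + 2 = (k : ℤ) + 1 + 1 := by ring
      rw [e4] at hr
      have : f (-((k : ℤ) + 1 + 1)) = X * f (-((k : ℤ) + 1)) - f (-(k : ℤ)) := by
        linear_combination h
      push_cast
      rw [this, ih.1, ih.2, hr]
      ring
  exact fun m => (key m).1

include h0 h1 hrec in
lemma aux13_fdeg : ∀ m : ℕ, (f ((m : ℤ) + 1)).Monic ∧ (f ((m : ℤ) + 1)).degree = m := by
  have key : ∀ m : ℕ,
      ((f ((m : ℤ) + 1)).Monic ∧ (f ((m : ℤ) + 1)).degree = m) ∧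
      ((f ((m : ℤ) + 1 + 1)).Monic ∧ (f ((m : ℤ) + 1 + 1)).degree = (m + 1 : ℕ)) := by
    intro m
    induction m with
    | zero =>
      have hf2 : f 2 = X := by
        have := aux13_frec2 f hrec 0
        simp only [zero_add, h0, h1, mul_one, sub_zero] at this
        exact this
      have ea : ((0 : ℕ) : ℤ) + 1 = 1 := by norm_num
      have eb : ((0 : ℕ) : ℤ) + 1 + 1 = 2 := by norm_num
      refine ⟨⟨by rw [ea, h1]; exact monic_one, by rw [ea, h1]; simp⟩, ?_⟩
      rw [eb, hf2]
      exact ⟨monic_X, by simp⟩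
    | succ k ih =>
      have e : ((k : ℤ) + 1) + 1 = (↑(k + 1) : ℤ) + 1 := by push_cast; ring
      refine ⟨by rw [← e]; exact ih.2, ?_⟩
      have hr := aux13_frec2 f hrec ((k : ℤ) + 1)
      have hXm : (X * f ((k : ℤ) + 1 + 1)).Monic := monic_X.mul ih.2.1
      have hXd : (X * f ((k : ℤ) + 1 + 1)).degree = ((k + 2 : ℕ) : WithBot ℕ) := by
        rw [degree_mul, degree_X, ih.2.2]
        push_cast
        ring
      have hlt : (f ((k : ℤ) + 1)).degree < (X * f ((k : ℤ) + 1 + 1)).degree := by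
        rw [hXd, ih.1.2]
        exact_mod_cast Nat.lt_succ_of_lt (Nat.lt_succ_self k)
      have e2 : (↑(k + 1) : ℤ) + 1 + 1 = ((k : ℤ) + 1) + 2 := by push_cast; ring
      rw [e2, hr]
      refine ⟨hXm.sub_of_left hlt, ?_⟩
      rw [degree_sub_eq_left_of_degree_lt hlt, hXd]
  exact fun m => (key m).1

include h0 h1 hrec in
lemma aux13_eval : ∀ (m : ℕ) (z : ℂ),
    Complex.sin z * ((f (m : ℤ)).map φ).eval (2 * Complex.cos z)
      = Complex.sin ((m : ℂ) * z) := by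
  have key : ∀ m : ℕ, ∀ z : ℂ,
      (Complex.sin z * ((f (m : ℤ)).map φ).eval (2 * Complex.cos z)
        = Complex.sin ((m : ℂ) * z)) ∧
      (Complex.sin z * ((f ((m : ℤ) + 1)).map φ).eval (2 * Complex.cos z)
        = Complex.sin (((m : ℂ) + 1) * z)) := by
    intro m
    induction m with
    | zero =>
      intro z
      constructor
      · simp [h0]
      · simp [h1]
    | succ k ih =>
      intro z
      have e : ((k + 1 : ℕ) : ℤ) = (k : ℤ) + 1 := by push_cast; ring
      refine ⟨by rw [e]; exact_mod_cast (ih z).2, ?_⟩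
      have hr := aux13_frec2 f hrec (k : ℤ)
      have e2 : ((k + 1 : ℕ) : ℤ) + 1 = (k : ℤ) + 2 := by push_cast; ring
      rw [e2, hr]
      rw [Polynomial.map_sub, Polynomial.map_mul, Polynomial.map_X, eval_sub, eval_mul, eval_X]
      have ih1 := (ih z).1
      have ih2 := (ih z).2
      have trig : Complex.sin (((k : ℂ) + 1 + 1) * z)
          = 2 * Complex.cos z * Complex.sin (((k : ℂ) + 1) * z) - Complex.sin ((k : ℂ) * z) := by
        have a1 : ((k : ℂ) + 1 + 1) * z = ((k : ℂ) + 1) * z + z := by ring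
        have a2 : ((k : ℂ)) * z = ((k : ℂ) + 1) * z - z := by ring
        rw [a1, a2, Complex.sin_add, Complex.sin_sub]
        ring
      have ecast : ((k + 1 : ℕ) : ℂ) + 1 = (k : ℂ) + 1 + 1 := by push_cast; ring
      rw [ecast, trig, ← ih1, ← ih2]
      ring

  exact fun m => fun z => (key m z).1

include h0 h1 hrec in
lemma aux13_main : ∀ m : ℕ,
    ((f ((m : ℤ) + 1) - f (m : ℤ)).map φ).Separable ∧
    ((f ((m : ℤ) + 1) + f (m : ℤ)).map φ).Separable := by
  intro m
  rcases Nat.eq_zero_or_pos m with rfl | hmpos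
  · constructor <;> simp [h0, h1, separable_one]
  -- m ≥ 1
  obtain ⟨m', rfl⟩ : ∃ m', m = m' + 1 := ⟨m - 1, (Nat.succ_pred_eq_of_pos hmpos).symm⟩
  set M := m' + 1 with hM
  have hdeg1 : (f ((M : ℤ) + 1)).Monic ∧ (f ((M : ℤ) + 1)).degree = M :=
    aux13_fdeg f h0 h1 hrec M
  have hdeg0 : (f ((m' : ℤ) + 1)).Monic ∧ (f ((m' : ℤ) + 1)).degree = m' :=
    aux13_fdeg f h0 h1 hrec m'
  have ecast : (m' : ℤ) + 1 = (M : ℤ) := by rw [hM]; push_cast; ring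
  have hfM : (f (M : ℤ)).degree = (m' : WithBot ℕ) := by rw [← ecast]; exact hdeg0.2
  have hfMlt : (f (M : ℤ)).degree < (f ((M : ℤ) + 1)).degree := by
    rw [hfM, hdeg1.2]
    exact_mod_cast Nat.lt_succ_self m'
  have hπ : (0 : ℝ) < Real.pi := Real.pi_pos
  have hM1 : (0 : ℝ) < 2 * (M : ℝ) + 1 := by positivity
  -- from a vanishing product with nonzero sine, extract a root
  have hroot_of : ∀ (θ : ℝ), Real.sin θ ≠ 0 → ∀ g : Polynomial ℤ,
      (Complex.sin (θ : ℂ) * ((g).map φ).eval (2 * Complex.cos (θ : ℂ)) = 0) →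
      (g.map φ).eval (((2 * Real.cos θ : ℝ) : ℂ)) = 0 := by
    intro θ hθ g hg
    have hcos : ((2 * Real.cos θ : ℝ) : ℂ) = 2 * Complex.cos (θ : ℂ) := by
      push_cast [Complex.ofReal_cos]
      ring
    have hsne : Complex.sin (θ : ℂ) ≠ 0 := by
      rw [← Complex.ofReal_sin]
      exact_mod_cast hθ
    rw [hcos]
    rcases mul_eq_zero.mp hg with h | h
    · exact absurd h hsne
    · exact h
  -- bounds for angles
  have hmem : ∀ a : ℝ, 0 < a → a < 2 * (M : ℝ) + 1 →
      0 < a * Real.pi / (2 * (M : ℝ) + 1) ∧ a * Real.pi / (2 * (M : ℝ) + 1) < Real.pi := by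
    intro a ha hb
    constructor
    · positivity
    · rw [div_lt_iff₀ hM1]
      nlinarith
  -- injectivity of the angle map
  have hthinj : ∀ a b : ℝ, a * Real.pi / (2 * (M : ℝ) + 1) = b * Real.pi / (2 * (M : ℝ) + 1) →
      a = b := by
    intro a b h
    have h1 : a * (Real.pi / (2 * (M : ℝ) + 1)) = b * (Real.pi / (2 * (M : ℝ) + 1)) := by
      rw [← mul_div_assoc, ← mul_div_assoc]
      exact h
    have h2 : Real.pi / (2 * (M : ℝ) + 1) ≠ 0 := by positivity
    exact mul_right_cancel₀ h2 h1
  -- injectivity of x from angles in (0, π)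
  have hxinj : ∀ θ1 θ2 : ℝ, 0 < θ1 → θ1 < Real.pi → 0 < θ2 → θ2 < Real.pi →
      ((2 * Real.cos θ1 : ℝ) : ℂ) = ((2 * Real.cos θ2 : ℝ) : ℂ) → θ1 = θ2 := by
    intro θ1 θ2 h1 h2 h3 h4 h
    have hr : 2 * Real.cos θ1 = 2 * Real.cos θ2 := by exact_mod_cast h
    have hc : Real.cos θ1 = Real.cos θ2 := by linarith
    exact Real.injOn_cos ⟨le_of_lt h1, le_of_lt h2⟩ ⟨le_of_lt h3, le_of_lt h4⟩ hc
  -- evaluation formulas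
  have hE1 : ∀ θ : ℝ, Complex.sin (θ : ℂ) * ((f ((M : ℤ) + 1)).map φ).eval
      (2 * Complex.cos (θ : ℂ)) = (Real.sin (((M : ℝ) + 1) * θ) : ℂ) := by
    intro θ
    have E1 := aux13_eval f h0 h1 hrec (M + 1) (θ : ℂ)
    have ec : ((M + 1 : ℕ) : ℤ) = (M : ℤ) + 1 := by push_cast; ring
    rw [ec] at E1
    rw [E1, Complex.ofReal_sin]
    congr 1
    push_cast
    ring
  have hE0 : ∀ θ : ℝ, Complex.sin (θ : ℂ) * ((f (M : ℤ)).map φ).eval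
      (2 * Complex.cos (θ : ℂ)) = (Real.sin ((M : ℝ) * θ) : ℂ) := by
    intro θ
    have E0 := aux13_eval f h0 h1 hrec M (θ : ℂ)
    rw [E0, Complex.ofReal_sin]
    congr 1
    push_cast
    ring
  constructor
  · -- difference
    have hPm : (f ((M : ℤ) + 1) - f (M : ℤ)).Monic := hdeg1.1.sub_of_left hfMlt
    have hPdeg : (f ((M : ℤ) + 1) - f (M : ℤ)).natDegree = M :=
      natDegree_eq_of_degree_eq_some
        (by rw [degree_sub_eq_left_of_degree_lt hfMlt, hdeg1.2])
    refine aux13_sep_of_roots _ M hPm hPdeg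
      (fun k => ((2 * Real.cos ((2 * (k : ℝ) + 1) * Real.pi / (2 * (M : ℝ) + 1)) : ℝ) : ℂ))
      ?_ ?_
    · intro k hk j hj hkj
      have hbk : (2 * (k : ℝ) + 1) < 2 * (M : ℝ) + 1 := by
        have : (k : ℝ) < M := by exact_mod_cast hk
        linarith
      have hbj : (2 * (j : ℝ) + 1) < 2 * (M : ℝ) + 1 := by
        have : (j : ℝ) < M := by exact_mod_cast hj
        linarith
      have hk0 : (0 : ℝ) < 2 * (k : ℝ) + 1 := by positivity
      have hj0 : (0 : ℝ) < 2 * (j : ℝ) + 1 := by positivity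
      obtain ⟨hk1, hk2⟩ := hmem _ hk0 hbk
      obtain ⟨hj1, hj2⟩ := hmem _ hj0 hbj
      have := hthinj _ _ (hxinj _ _ hk1 hk2 hj1 hj2 hkj)
      have : (k : ℝ) = (j : ℝ) := by linarith
      exact_mod_cast this
    · intro k hk
      set θk : ℝ := (2 * (k : ℝ) + 1) * Real.pi / (2 * (M : ℝ) + 1) with hθk
      have hbk : (2 * (k : ℝ) + 1) < 2 * (M : ℝ) + 1 := by
        have : (k : ℝ) < M := by exact_mod_cast hk
        linarith
      obtain ⟨ht1, ht2⟩ := hmem _ (by positivity) hbk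
      have hsne : Real.sin θk ≠ 0 := ne_of_gt (Real.sin_pos_of_pos_of_lt_pi ht1 ht2)
      apply hroot_of θk hsne
      rw [Polynomial.map_sub, eval_sub, mul_sub, hE1 θk, hE0 θk]
      have hc : (2 * (M : ℝ) + 1) * θk / 2 = (k : ℝ) * Real.pi + Real.pi / 2 := by
        rw [hθk]
        field_simp
      have hcos0 : Real.cos ((2 * (M : ℝ) + 1) * θk / 2) = 0 := by
        rw [hc, Real.cos_add]
        have hsk : Real.sin ((k : ℝ) * Real.pi) = 0 := by
          exact_mod_cast Real.sin_nat_mul_pi k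
        simp [Real.cos_pi_div_two, hsk]
      have expand : Real.sin (((M : ℝ) + 1) * θk) - Real.sin ((M : ℝ) * θk)
          = 2 * Real.cos ((2 * (M : ℝ) + 1) * θk / 2) * Real.sin (θk / 2) := by
        have a1 : ((M : ℝ) + 1) * θk = (2 * (M : ℝ) + 1) * θk / 2 + θk / 2 := by ring
        have a2 : ((M : ℝ)) * θk = (2 * (M : ℝ) + 1) * θk / 2 - θk / 2 := by ring
        rw [a1, a2, Real.sin_add, Real.sin_sub]
        ring
      rw [hcos0] at expand
      have : Real.sin (((M : ℝ) + 1) * θk) = Real.sin ((M : ℝ) * θk) := by linarith [expand]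
      rw [this]
      ring
  · -- sum
    have hQm : (f ((M : ℤ) + 1) + f (M : ℤ)).Monic := hdeg1.1.add_of_left hfMlt
    have hQdeg : (f ((M : ℤ) + 1) + f (M : ℤ)).natDegree = M :=
      natDegree_eq_of_degree_eq_some
        (by rw [degree_add_eq_left_of_degree_lt hfMlt, hdeg1.2])
    refine aux13_sep_of_roots _ M hQm hQdeg
      (fun k => ((2 * Real.cos ((2 * (k : ℝ) + 2) * Real.pi / (2 * (M : ℝ) + 1)) : ℝ) : ℂ))
      ?_ ?_
    · intro k hk j hj hkj
      have hbk : (2 * (k : ℝ) + 2) < 2 * (M : ℝ) + 1 := by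
        have hh : (k : ℝ) + 1 ≤ M := by exact_mod_cast hk
        linarith
      have hbj : (2 * (j : ℝ) + 2) < 2 * (M : ℝ) + 1 := by
        have hh : (j : ℝ) + 1 ≤ M := by exact_mod_cast hj
        linarith
      obtain ⟨hk1, hk2⟩ := hmem _ (by positivity) hbk
      obtain ⟨hj1, hj2⟩ := hmem _ (by positivity) hbj
      have := hthinj _ _ (hxinj _ _ hk1 hk2 hj1 hj2 hkj)
      have : (k : ℝ) = (j : ℝ) := by linarith
      exact_mod_cast this
    · intro k hk
      set θk : ℝ := (2 * (k : ℝ) + 2) * Real.pi / (2 * (M : ℝ) + 1) with hθk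
      have hbk : (2 * (k : ℝ) + 2) < 2 * (M : ℝ) + 1 := by
        have hh : (k : ℝ) + 1 ≤ M := by exact_mod_cast hk
        linarith
      obtain ⟨ht1, ht2⟩ := hmem _ (by positivity) hbk
      have hsne : Real.sin θk ≠ 0 := ne_of_gt (Real.sin_pos_of_pos_of_lt_pi ht1 ht2)
      apply hroot_of θk hsne
      rw [Polynomial.map_add, eval_add, mul_add, hE1 θk, hE0 θk]
      have hc : (2 * (M : ℝ) + 1) * θk / 2 = ((k : ℝ) + 1) * Real.pi := by
        rw [hθk]
        field_simp
      have hsin0 : Real.sin ((2 * (M : ℝ) + 1) * θk / 2) = 0 := by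
        rw [hc]
        have : (((k + 1 : ℕ)) : ℝ) = (k : ℝ) + 1 := by push_cast; ring
        rw [← this]
        exact Real.sin_nat_mul_pi (k + 1)
      have expand : Real.sin (((M : ℝ) + 1) * θk) + Real.sin ((M : ℝ) * θk)
          = 2 * Real.sin ((2 * (M : ℝ) + 1) * θk / 2) * Real.cos (θk / 2) := by
        have a1 : ((M : ℝ) + 1) * θk = (2 * (M : ℝ) + 1) * θk / 2 + θk / 2 := by ring
        have a2 : ((M : ℝ)) * θk = (2 * (M : ℝ) + 1) * θk / 2 - θk / 2 := by ring
        rw [a1, a2, Real.sin_add, Real.sin_sub]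
        ring
      rw [hsin0] at expand
      have : Real.sin (((M : ℝ) + 1) * θk) = - Real.sin ((M : ℝ) * θk) := by linarith [expand]
      rw [this]
      push_cast
      ring

end

end AuxStmt13

theorem stmt_13 (f : ℤ → Polynomial ℤ) (h0 : f 0 = 0) (h1 : f 1 = 1)
    (hrec : ∀ n : ℤ, f (n - 1) + f (n + 1) = X * f n) (n : ℤ) :
    ((f (n + 1) - f n).map (Int.castRingHom ℂ)).Separable ∧
    ((f (n + 1) + f n).map (Int.castRingHom ℂ)).Separable := by
  rcases le_or_gt 0 n with hn | hn
  · obtain ⟨m, rfl⟩ : ∃ m : ℕ, n = (m : ℤ) := ⟨n.toNat, (Int.toNat_of_nonneg hn).symm⟩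
    exact aux13_main f h0 h1 hrec m
  · -- n < 0 : use f (-k) = -f k
    obtain ⟨m, hm⟩ : ∃ m : ℕ, n = -((m : ℤ)) - 1 := by
      refine ⟨(-n - 1).toNat, ?_⟩
      have : (0 : ℤ) ≤ -n - 1 := by omega
      rw [Int.toNat_of_nonneg this]; ring
    subst hm
    have e1 : -((m : ℤ)) - 1 + 1 = -(m : ℤ) := by ring
    have e2 : -((m : ℤ)) - 1 = -((m : ℤ) + 1) := by ring
    have hneg1 : f (-(m : ℤ)) = -f (m : ℤ) := aux13_fneg f h0 h1 hrec m
    have hneg2 : f (-((m : ℤ) + 1)) = -f ((m : ℤ) + 1) := by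
      have := aux13_fneg f h0 h1 hrec (m + 1)
      push_cast at this
      exact this
    rw [e1, e2, hneg1, hneg2]
    have hmain := aux13_main f h0 h1 hrec m
    constructor
    · have : -f (m : ℤ) - -f ((m : ℤ) + 1) = f ((m : ℤ) + 1) - f (m : ℤ) := by ring
      rw [this]
      exact hmain.1
    · have : -f (m : ℤ) + -f ((m : ℤ) + 1) = -(f ((m : ℤ) + 1) + f (m : ℤ)) := by ring
      rw [this, Polynomial.map_neg]
      exact aux13_sep_neg hmain.2
end

section
/- Let n be an even integer, n = 2m. Then for every nonzero complex number s with s ≠ ±1, f_{m+1}(s + s⁻¹) - f_{m-1}(s + s⁻¹) = sᵐ + s⁻ᵐ. Consequently, the zeros of ℓ_n(u) = f_{m+1}(u) - f_{m-1}(u) are exactly the numbers u = s + s⁻¹ where sⁿ = -1. -/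
open Polynomial

private lemma rec_unique (a : ℂ) (g t : ℤ → ℂ)
    (hg : ∀ k : ℤ, g (k - 1) + g (k + 1) = a * g k)
    (ht : ∀ k : ℤ, t (k - 1) + t (k + 1) = a * t k)
    (h0 : g 0 = t 0) (h1 : g 1 = t 1) : ∀ k : ℤ, g k = t k := by
  have up : ∀ k : ℤ, g k = t k → g (k + 1) = t (k + 1) → g (k + 2) = t (k + 2) := by
    intro k e0 e1
    have hgk := hg (k + 1)
    have htk := ht (k + 1)
    have e : k + 1 - 1 = k := by ring
    have e' : k + 1 + 1 = k + 2 := by ring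
    rw [e, e'] at hgk htk
    have : g (k + 2) = a * g (k + 1) - g k := by linear_combination hgk
    rw [this, e0, e1]
    linear_combination -htk
  have down : ∀ k : ℤ, g k = t k → g (k + 1) = t (k + 1) → g (k - 1) = t (k - 1) := by
    intro k e0 e1
    have hgk := hg k
    have htk := ht k
    have : g (k - 1) = a * g k - g (k + 1) := by linear_combination hgk
    rw [this, e0, e1]
    linear_combination -htk
  have key : ∀ k : ℤ, g k = t k ∧ g (k + 1) = t (k + 1) := by
    intro k
    induction k using Int.induction_on with
    | zero => exact ⟨h0, h1⟩
    | succ k ih =>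
      refine ⟨ih.2, ?_⟩
      have := up k ih.1 ih.2
      have e : (k : ℤ) + 1 + 1 = k + 2 := by ring
      rw [e]; exact this
    | pred k ih =>
      have e : (-(k : ℤ) - 1) + 1 = -k := by ring
      refine ⟨?_, by rw [e]; exact ih.1⟩
      have := down (-(k : ℤ)) ih.1 ih.2
      have e' : -(k : ℤ) - 1 = -k - 1 := by ring
      rw [e']; exact this
  exact fun k => (key k).1

private lemma main_id (f : ℤ → Polynomial ℤ) (h0 : f 0 = 0) (h1 : f 1 = 1)
    (hrec : ∀ n : ℤ, f (n - 1) + f (n + 1) = X * f n)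
    (s : ℂ) (hs : s ≠ 0) (m : ℤ) :
    Polynomial.aeval (s + s⁻¹) (f (m + 1) - f (m - 1)) = s ^ m + s ^ (-m) := by
  have hfm1 : f (-1) = -1 := by
    have := hrec 0
    simp only [zero_sub, zero_add, h0, h1, mul_zero] at this
    linear_combination this
  have hf2 : f 2 = X := by
    have := hrec 1
    norm_num [h0, h1] at this
    linear_combination this
  set a : ℂ := s + s⁻¹ with ha
  have hg : ∀ k : ℤ, (fun k : ℤ => Polynomial.aeval a (f (k + 1) - f (k - 1))) (k - 1)
      + (fun k : ℤ => Polynomial.aeval a (f (k + 1) - f (k - 1))) (k + 1)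
      = a * (fun k : ℤ => Polynomial.aeval a (f (k + 1) - f (k - 1))) k := by
    intro k
    simp only
    have e1 : k - 1 + 1 = k := by ring
    have e2 : k - 1 - 1 = k - 1 - 1 := rfl
    have r1 := hrec (k + 1)
    have r2 := hrec (k - 1)
    have e3 : k + 1 - 1 = k := by ring
    have e4 : k - 1 + 1 = k := by ring
    rw [e3] at r1
    rw [e4] at r2
    -- r1 : f k + f (k+1+1) = X * f (k+1)
    -- r2 : f (k-1-1) + f k = X * f (k-1)
    have key : (f (k - 1 + 1) - f (k - 1 - 1)) + (f (k + 1 + 1) - f (k + 1 - 1))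
        = X * (f (k + 1) - f (k - 1)) := by
      rw [e1, e3]
      linear_combination r1 - r2
    calc Polynomial.aeval a (f (k - 1 + 1) - f (k - 1 - 1))
          + Polynomial.aeval a (f (k + 1 + 1) - f (k + 1 - 1))
        = Polynomial.aeval a ((f (k - 1 + 1) - f (k - 1 - 1))
            + (f (k + 1 + 1) - f (k + 1 - 1))) := by rw [map_add]
      _ = Polynomial.aeval a (X * (f (k + 1) - f (k - 1))) := by rw [key]
      _ = a * Polynomial.aeval a (f (k + 1) - f (k - 1)) := by
            rw [map_mul, aeval_X]
  have ht : ∀ k : ℤ, (fun k : ℤ => s ^ k + s ^ (-k)) (k - 1)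
      + (fun k : ℤ => s ^ k + s ^ (-k)) (k + 1)
      = a * (fun k : ℤ => s ^ k + s ^ (-k)) k := by
    intro k
    simp only [ha]
    have h1' : s ^ (k - 1) = s ^ k * s⁻¹ := by
      rw [zpow_sub₀ hs, zpow_one, div_eq_mul_inv]
    have h2' : s ^ (k + 1) = s ^ k * s := by rw [zpow_add₀ hs, zpow_one]
    have h3' : s ^ (-(k - 1)) = s ^ (-k) * s := by
      rw [show -(k - 1) = -k + 1 by ring, zpow_add₀ hs, zpow_one]
    have h4' : s ^ (-(k + 1)) = s ^ (-k) * s⁻¹ := by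
      rw [show -(k + 1) = -k - 1 by ring, zpow_sub₀ hs, zpow_one, div_eq_mul_inv]
    rw [h1', h2', h3', h4']
    ring
  have h0' : Polynomial.aeval a (f (0 + 1) - f (0 - 1)) = s ^ (0:ℤ) + s ^ (-(0:ℤ)) := by
    have e1 : (0:ℤ) + 1 = 1 := by norm_num
    have e2 : (0:ℤ) - 1 = -1 := by norm_num
    rw [e1, e2, h1, hfm1]
    simp [map_sub]
  have h1'' : Polynomial.aeval a (f (1 + 1) - f (1 - 1)) = s ^ (1:ℤ) + s ^ (-(1:ℤ)) := by
    norm_num [h0, hf2, zpow_one]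
    exact ha
  have := rec_unique a (fun k : ℤ => Polynomial.aeval a (f (k + 1) - f (k - 1)))
      (fun k : ℤ => s ^ k + s ^ (-k)) hg ht h0' h1'' m
  exact this

theorem stmt_15 (f : ℤ → Polynomial ℤ) (h0 : f 0 = 0) (h1 : f 1 = 1)
    (hrec : ∀ n : ℤ, f (n - 1) + f (n + 1) = X * f n) (n m : ℤ) (hnm : n = 2 * m) :
    (∀ s : ℂ, s ≠ 0 → s ≠ 1 → s ≠ -1 →
      Polynomial.aeval (s + s⁻¹) (f (m + 1) - f (m - 1)) = s ^ m + s ^ (-m)) ∧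
    (∀ u : ℂ, Polynomial.aeval u (f (m + 1) - f (m - 1)) = 0 ↔
      ∃ s : ℂ, s ^ n = -1 ∧ u = s + s⁻¹) := by
  constructor
  · intro s hs _ _
    exact main_id f h0 h1 hrec s hs m
  · intro u
    constructor
    · intro hu
      -- find s with s + s⁻¹ = u
      obtain ⟨s, hsroot⟩ : ∃ s : ℂ, (X ^ 2 - C u * X + 1 : Polynomial ℂ).IsRoot s := by
        apply Complex.exists_root
        have hdeg : (X ^ 2 - C u * X + 1 : Polynomial ℂ).degree = 2 := by
          compute_degree!
        rw [hdeg]; norm_num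
      have hs0 : s ^ 2 - u * s + 1 = 0 := by
        simpa using hsroot
      have hsne : s ≠ 0 := by
        intro h
        rw [h] at hs0
        norm_num at hs0
      have husum : u = s + s⁻¹ := by
        field_simp
        linear_combination -hs0
      have := main_id f h0 h1 hrec s hsne m
      rw [← husum] at this
      rw [this] at hu
      refine ⟨s, ?_, husum⟩
      have hm : s ^ m = -s ^ (-m) := by linear_combination hu
      have : s ^ n = s ^ m * s ^ m := by
        rw [hnm, two_mul, zpow_add₀ hsne]
      rw [this]
      have hprod : s ^ (-m) * s ^ m = 1 := by
        rw [← zpow_add₀ hsne]; norm_num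
      linear_combination s ^ m * hm - hprod
    · intro ⟨s, hsn, husum⟩
      have hsne : s ≠ 0 := by
        intro h
        rw [h] at hsn
        rcases eq_or_ne n 0 with h0n | h0n
        · rw [h0n] at hsn; norm_num at hsn
        · rw [zero_zpow n h0n] at hsn; norm_num at hsn
      rw [husum, main_id f h0 h1 hrec s hsne m]
      have hkey : s ^ m * s ^ m = -1 := by
        rw [← zpow_add₀ hsne, ← two_mul, ← hnm]; exact hsn
      have hinv : s ^ (-m) = -s ^ m := by
        have hprod : s ^ (-m) * s ^ m = 1 := by
          rw [← zpow_add₀ hsne]; norm_num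
        have hmne : s ^ m ≠ 0 := zpow_ne_zero m hsne
        apply mul_right_cancel₀ hmne
        rw [hprod]
        linear_combination hkey
      rw [hinv]; ring
end

section
/- For every integer m ≥ 1, the polynomial q_m(b) = b^{2m} - b^{m+1} + b^{m-1} + 1 has no root that is a root of unity. -/
open Polynomial

theorem stmt_16 (m : ℕ) (hm : 1 ≤ m) (ω : ℂ)
    (hω : ∃ k : ℕ, 1 ≤ k ∧ ω ^ k = 1) :
    ω ^ (2 * m) - ω ^ (m + 1) + ω ^ (m - 1) + 1 ≠ 0 := by
  obtain ⟨k, hk, hωk⟩ := hω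
  obtain ⟨n, rfl⟩ : ∃ n, m = n + 1 := ⟨m - 1, (Nat.succ_pred_eq_of_pos hm).symm⟩
  have hω0 : ω ≠ 0 := by
    intro h0
    rw [h0, zero_pow (by omega)] at hωk
    exact zero_ne_one hωk
  have habs : ‖ω‖ = 1 := by
    have h1 : ‖ω‖ ^ k = 1 := by rw [← norm_pow, hωk, norm_one]
    have h2 : (0:ℝ) ≤ ‖ω‖ := norm_nonneg ω
    rcases (pow_eq_one_iff_cases).mp h1 with h | h | h <;> first | omega | linarith [h]
  have hconj : (starRingEnd ℂ) ω = ω⁻¹ := Complex.inv_eq_conj habs |>.symm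
  intro hE1
  simp only [Nat.add_sub_cancel] at hE1
  -- conjugate equation
  have hE2' := congrArg (starRingEnd ℂ) hE1
  simp only [map_add, map_sub, map_pow, map_one, map_zero, hconj, inv_pow] at hE2'
  have hE2 : 1 - ω ^ n + ω ^ (n + 2) + ω ^ (2 * (n + 1)) = 0 := by
    have h' := congrArg (· * ω ^ (2 * (n + 1))) hE2'
    simp only [zero_mul] at h'
    field_simp at h'
    have hstep : ω ^ (2 * (n + 1)) * ω ^ (2 * (n + 1)) *
        (1 - ω ^ n + ω ^ (n + 2) + ω ^ (2 * (n + 1))) = 0 := by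
      linear_combination ω ^ (2 * (n + 1)) * h'
    rcases mul_eq_zero.mp hstep with h | h
    · exact absurd h (mul_ne_zero (pow_ne_zero _ hω0) (pow_ne_zero _ hω0))
    · exact h
  have hsq : ω ^ 2 = 1 := by
    have hz : ω ^ n * (ω ^ 2 - 1) = 0 := by linear_combination (hE2 - hE1) / 2
    rcases mul_eq_zero.mp hz with h | h
    · exact absurd h (pow_ne_zero n hω0)
    · exact sub_eq_zero.mp h
  have h1 : ω ^ (2 * (n + 1)) = 1 := by
    rw [pow_mul, hsq, one_pow]
  have h2 : ω ^ (2 * (n + 1)) = -1 := by linear_combination (hE1 + hE2) / 2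
  rw [h1] at h2
  norm_num at h2
end

section
/- For every odd integer n ≥ 3, the only roots of r_n(x) = x^{2n} - x^{n+2} + x^{n-2} + 1 that are roots of unity are x = i and x = -i, and each is a simple root of r_n. -/
open Polynomial

private lemma aux_root (n : ℕ) (hodd : Odd n) (hn : 3 ≤ n) (ω : ℂ) (hω : ω^2 = -1) :
    ω^(2*n) - ω^(n+2) + ω^(n-2) + 1 = 0 := by
  have h0 : ω ≠ 0 := by intro h; rw [h] at hω; norm_num at hω
  have e1 : ω^(2*n) * ω^2 = 1 := by
    rw [← pow_add, show 2*n+2 = 2*(n+1) by ring, pow_mul, hω]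
    exact (hodd.add_one).neg_one_pow
  have e2 : ω^(n+2) * ω^2 = ω^n := by
    rw [← pow_add, show n+2+2 = n+2*2 by ring, pow_add, pow_mul, hω]; norm_num
  have e3 : ω^(n-2) * ω^2 = ω^n := by
    rw [← pow_add]; congr 1; omega
  have key : (ω^(2*n) - ω^(n+2) + ω^(n-2) + 1) * ω^2 = 0 := by
    calc (ω^(2*n) - ω^(n+2) + ω^(n-2) + 1) * ω^2
        = ω^(2*n)*ω^2 - ω^(n+2)*ω^2 + ω^(n-2)*ω^2 + ω^2 := by ring
      _ = 1 - ω^n + ω^n + (-1) := by rw [e1, e2, e3, hω]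
      _ = 0 := by ring
  rcases mul_eq_zero.mp key with h | h
  · exact h
  · exact absurd h (pow_ne_zero 2 h0)

private lemma aux_deriv (n : ℕ) (hodd : Odd n) (hn : 3 ≤ n) (ω : ℂ) (hω : ω^2 = -1) :
    2*n*ω^(2*n-1) - (n+2)*ω^(n+1) + (n-2)*ω^(n-3) ≠ 0 := by
  have h0 : ω ≠ 0 := by intro h; rw [h] at hω; norm_num at hω
  have h4 : ω^4 = 1 := by rw [show 4 = 2*2 from rfl, pow_mul, hω]; norm_num
  intro h
  have key : (2*n*ω^(2*n-1) - (n+2)*ω^(n+1) + (n-2)*ω^(n-3)) * ω^3 = 0 := by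
    rw [h]; ring
  have e1 : ω^(2*n-1) * ω^3 = 1 := by
    rw [← pow_add, show 2*n-1+3 = 2*(n+1) by omega, pow_mul, hω]
    exact (hodd.add_one).neg_one_pow
  have e2 : ω^(n+1) * ω^3 = ω^n := by
    rw [← pow_add, show n+1+3 = n+4 by ring, pow_add, h4]; ring
  have e3 : ω^(n-3) * ω^3 = ω^n := by rw [← pow_add]; congr 1; omega
  have key2 : 2*(n:ℂ) - 4*ω^n = 0 := by
    have : (2*(n:ℂ)*ω^(2*n-1) - (n+2)*ω^(n+1) + (n-2)*ω^(n-3)) * ω^3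
        = 2*n*(ω^(2*n-1)*ω^3) - (n+2)*(ω^(n+1)*ω^3) + (n-2)*(ω^(n-3)*ω^3) := by ring
    rw [this, e1, e2, e3] at key
    calc 2*(n:ℂ) - 4*ω^n = 2*n*1 - (n+2)*ω^n + (n-2)*ω^n := by push_cast; ring
      _ = 0 := key
  have hsq : (ω^n)^2 = -1 := by
    rw [← pow_mul, show n*2 = 2*n by ring, pow_mul, hω]
    exact hodd.neg_one_pow
  have h2 : 4*ω^n = 2*(n:ℂ) := by linear_combination -key2
  have h16 : (2*(n:ℂ))^2 = -16 := by
    calc (2*(n:ℂ))^2 = (4*ω^n)^2 := by rw [h2]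
      _ = 16 * (ω^n)^2 := by ring
      _ = -16 := by rw [hsq]; ring
  have : ((n:ℂ))^2 = -4 := by linear_combination h16/4
  have : ((n^2 + 4 : ℕ) : ℂ) = 0 := by push_cast; linear_combination this
  have := Nat.cast_eq_zero.mp this
  omega

private lemma aux_forward (n : ℕ) (hodd : Odd n) (hn : 3 ≤ n) (ω : ℂ)
    (hc : ω * (starRingEnd ℂ) ω = 1)
    (hE : ω^(2*n) - ω^(n+2) + ω^(n-2) + 1 = 0) : ω = Complex.I ∨ ω = -Complex.I := by
  set c := (starRingEnd ℂ) ω with hcdef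
  have h0 : ω ≠ 0 := by intro h; rw [h] at hc; simp at hc
  have e1 : ω^(2*n) * c^n = ω^n := by
    rw [show 2*n = n + n by ring, pow_add, mul_assoc, ← mul_pow, hc]; ring
  have e2 : ω^(n+2) * c^n = ω^2 := by
    rw [pow_add, mul_comm (ω^n), mul_assoc, ← mul_pow, hc]; ring
  have e3 : ω^(n-2) * c^n = c^2 := by
    have hcn : c^n = c^(n-2) * c^2 := by rw [← pow_add]; congr 1; omega
    rw [hcn, ← mul_assoc, ← mul_pow, hc, one_pow, one_mul]
  have hA : ω^n - ω^2 + c^2 + c^n = 0 := by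
    calc ω^n - ω^2 + c^2 + c^n
        = (ω^(2*n) - ω^(n+2) + ω^(n-2) + 1) * c^n - (ω^(2*n)*c^n - ω^n)
            + (ω^(n+2)*c^n - ω^2) - (ω^(n-2)*c^n - c^2) := by ring
      _ = 0 := by rw [hE, e1, e2, e3]; ring
  have hB : c^n - c^2 + ω^2 + ω^n = 0 := by
    have := congrArg (starRingEnd ℂ) hA
    simpa [hcdef, map_sub, map_add, map_pow, Complex.conj_conj] using this
  have hsq : ω^2 = c^2 := by linear_combination (hB - hA) / 2
  have hpown : ω^n + c^n = 0 := by linear_combination (hA + hB) / 2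
  have h4 : ω^4 = 1 := by
    calc ω^4 = ω^2 * ω^2 := by ring
      _ = ω^2 * c^2 := by rw [hsq]
      _ = (ω*c)^2 := by ring
      _ = 1 := by rw [hc]; norm_num
  have hcase : ω^2 = 1 ∨ ω^2 = -1 := by
    have : (ω^2 - 1) * (ω^2 + 1) = 0 := by linear_combination h4 - 1
    rcases mul_eq_zero.mp this with h | h
    · left; linear_combination h
    · right; linear_combination h
  rcases hcase with h | h
  · exfalso
    have hcω : c = ω := by
      have : ω * c = ω * ω := by rw [hc, ← h]; ring
      exact mul_left_cancel₀ h0 this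
    rw [hcω] at hpown
    have hωn : ω^n = 0 := by linear_combination hpown / 2
    exact pow_ne_zero n h0 hωn
  · have : (ω - Complex.I) * (ω + Complex.I) = 0 := by
      have hI : Complex.I^2 = -1 := Complex.I_sq
      linear_combination h - hI
    rcases mul_eq_zero.mp this with h' | h'
    · left; linear_combination h'
    · right; linear_combination h'

theorem stmt_17 (n : ℕ) (hodd : Odd n) (hn : 3 ≤ n)
    (p : Polynomial ℂ) (hp : p = X ^ (2 * n) - X ^ (n + 2) + X ^ (n - 2) + 1) :
    (∀ ω : ℂ, (∃ k : ℕ, 1 ≤ k ∧ ω ^ k = 1) →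
      (p.eval ω = 0 ↔ ω = Complex.I ∨ ω = -Complex.I)) ∧
    p.eval Complex.I = 0 ∧ p.derivative.eval Complex.I ≠ 0 ∧
    p.eval (-Complex.I) = 0 ∧ p.derivative.eval (-Complex.I) ≠ 0 := by
  have hI : Complex.I^2 = -1 := Complex.I_sq
  have hnI : (-Complex.I)^2 = -1 := by rw [neg_pow]; simp [Complex.I_sq]
  have heval : ∀ ω : ℂ, p.eval ω = ω^(2*n) - ω^(n+2) + ω^(n-2) + 1 := by
    intro ω; simp [hp]
  have hderiv : ∀ ω : ℂ, p.derivative.eval ω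
      = 2*n*ω^(2*n-1) - (n+2)*ω^(n+1) + (n-2)*ω^(n-3) := by
    intro ω
    rw [hp]
    simp [derivative_pow]
    rw [show n-2-1 = n-3 by omega, Nat.cast_sub (by omega : 2 ≤ n)]
    norm_num
  refine ⟨?_, ?_, ?_, ?_, ?_⟩
  · rintro ω ⟨k, hk1, hk⟩
    constructor
    · intro h
      have hnorm : ‖ω‖ = 1 := Complex.norm_eq_one_of_pow_eq_one hk (by omega)
      have hc : ω * (starRingEnd ℂ) ω = 1 := by
        rw [Complex.mul_conj]
        norm_cast
        rw [Complex.normSq_eq_norm_sq, hnorm]; norm_num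
      exact aux_forward n hodd hn ω hc (by rw [← heval ω]; exact h)
    · rintro (rfl | rfl)
      · rw [heval]; exact aux_root n hodd hn _ hI
      · rw [heval]; exact aux_root n hodd hn _ hnI
  · rw [heval]; exact aux_root n hodd hn _ hI
  · rw [hderiv]; exact aux_deriv n hodd hn _ hI
  · rw [heval]; exact aux_root n hodd hn _ hnI
  · rw [hderiv]; exact aux_deriv n hodd hn _ hnI
end
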